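/- Let π = (p_1,...,p_n) be a sequence of distinct keys avoiding the pattern (3,1,2) (i.e., there are no indices i < j < k with p_j < p_k < p_i). For every i with 2 ≤ i ≤ n, letting M = max{p_1,...,p_{i−1}}, one of the following holds: (a) p_i > M and p_i is the unique sub-root at time i whose key is greater than M, or (b) p_i is the largest sub-root at time i whose key is smaller than M. -/

import Mathlib

/-- Binary trees with keys at internal nodes. -/
inductive BT (α : Type) where
  | leaf : BT α
  | node : BT α → α → BT α → BT α
deriving DecidableEq

namespace BT

variable {α : Type} [LinearOrder α]

/-- The list of keys of a tree, in symmetric (inorder) order. -/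
def keys : BT α → List α
  | leaf => []
  | node l v r => keys l ++ v :: keys r

/-- The number of nodes of a tree. -/
def size : BT α → ℕ
  | leaf => 0
  | node l _ r => size l + size r + 1

/-- The symmetric-order (binary search tree) property. -/
def IsBST : BT α → Prop
  | leaf => True
  | node l v r => (∀ x ∈ l.keys, x < v) ∧ (∀ x ∈ r.keys, v < x) ∧ l.IsBST ∧ r.IsBST

/-- Preorder of a binary tree: root, then left subtree, then right subtree. -/
def preorder : BT α → List α
  | leaf => []
  | node l v r => v :: (preorder l ++ preorder r)

/-- Postorder of a binary tree: left subtree, right subtree, then root. -/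
def postorder : BT α → List α
  | leaf => []
  | node l v r => postorder l ++ postorder r ++ [v]

/-- Reversed preorder: root, then right subtree, then left subtree
(the preorder of the mirror image). -/
def revPreorder : BT α → List α
  | leaf => []
  | node l v r => v :: (revPreorder r ++ revPreorder l)

/-- Standard leaf insertion into a binary search tree. -/
def insertKey : BT α → α → BT α
  | leaf, x => node leaf x leaf
  | node l v r, x =>
    if x < v then node (insertKey l x) v r
    else if v < x then node l v (insertKey r x)
    else node l v r

/-- The depth (number of edges from the root) of the node with key `x`,
located by binary search. -/
def depthOf : BT α → α → ℕ
  | leaf, _ => 0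
  | node l v r, x =>
    if x < v then depthOf l x + 1
    else if v < x then depthOf r x + 1
    else 0

/-- The search path to the key `x`: `false` records a step to a left child,
`true` a step to a right child. -/
def pathTo : BT α → α → List Bool
  | leaf, _ => []
  | node l v r, x =>
    if x < v then false :: pathTo l x
    else if v < x then true :: pathTo r x
    else []

/-- The left-depth of the node with key `x`: the number of left-child edges
on the path from the root to it. -/
def leftDepthKey : BT α → α → ℕ
  | leaf, _ => 0
  | node l v r, x =>
    if x < v then leftDepthKey l x + 1
    else if v < x then leftDepthKey r x
    else 0

/-- The subtree rooted at the node with key `x` (empty if `x` is absent). -/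
def subtreeAt : BT α → α → BT α
  | leaf, _ => leaf
  | node l v r, x =>
    if x < v then subtreeAt l x
    else if v < x then subtreeAt r x
    else node l v r

/-- The key at the root, if any. -/
def rootKey : BT α → Option α
  | leaf => none
  | node _ v _ => some v

/-- The key of the parent of the node with key `x`, if any. -/
def parentKey : BT α → α → Option α
  | leaf, _ => none
  | node l v r, x =>
    if x < v then (if l.rootKey = some x then some v else l.parentKey x)
    else if v < x then (if r.rootKey = some x then some v else r.parentKey x)
    else none

/-- A step of the context (zipper) describing the search path from the root
to the current subtree: `inL v r` means the current subtree is the left child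
of a node with key `v` and right subtree `r`; `inR l v` means it is the right
child of a node with key `v` and left subtree `l`. -/
inductive Ctx (α : Type) where
  | inL : α → BT α → Ctx α
  | inR : BT α → α → Ctx α

/-- Descend along the search path for `x`, recording the context.
The head of the returned list corresponds to the immediate parent. -/
def descend : BT α → α → List (Ctx α) → List (Ctx α) × BT α
  | leaf, _, acc => (acc, leaf)
  | node l v r, x, acc =>
    if x < v then descend l x (Ctx.inL v r :: acc)
    else if v < x then descend r x (Ctx.inR l v :: acc)
    else (acc, node l v r)

/-- Reattach a subtree into its context, with no rotations. -/
def rebuild : BT α → List (Ctx α) → BT α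
  | t, [] => t
  | t, Ctx.inL v r :: cs => rebuild (node t v r) cs
  | t, Ctx.inR l v :: cs => rebuild (node l v t) cs

/-- Bottom-up splay steps: repeatedly apply zig / zig-zig / zig-zag steps to
the current subtree (rooted at the node being splayed) until the context is
exhausted. -/
def splayLoop : BT α → List (Ctx α) → BT α
  | t, [] => t
  | node a x b, [Ctx.inL v r] => node a x (node b v r)          -- zig
  | node a x b, [Ctx.inR l v] => node (node l v a) x b          -- zig
  | node a x b, Ctx.inL p pr :: Ctx.inL g gr :: cs =>           -- zig-zig
      splayLoop (node a x (node b p (node pr g gr))) cs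
  | node a x b, Ctx.inL p pr :: Ctx.inR gl g :: cs =>           -- zig-zag
      splayLoop (node (node gl g a) x (node b p pr)) cs
  | node a x b, Ctx.inR pl p :: Ctx.inR gl g :: cs =>           -- zig-zig
      splayLoop (node (node (node gl g pl) p a) x b) cs
  | node a x b, Ctx.inR pl p :: Ctx.inL g gr :: cs =>           -- zig-zag
      splayLoop (node (node pl p a) x (node b g gr)) cs
  | leaf, cs => rebuild leaf cs   -- unreachable when the splayed key is present

/-- Splaying the key `x`: if `x` occurs in the tree, bring its node to the
root by bottom-up splay steps; otherwise leave the tree unchanged. -/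
def splay (x : α) (t : BT α) : BT α :=
  match descend t x [] with
  | (_, leaf) => t
  | (cs, found) => splayLoop found cs

/-- `α`-weight-balance in the sense of Nievergelt–Reingold:
at each node, `min(|L|,|R|) + 1 ≥ α * (|x| + 1)`. -/
def WeightBalanced (a : ℝ) : BT α → Prop
  | leaf => True
  | node l _ r =>
      (min l.size r.size + 1 : ℝ) ≥ a * ((l.size + r.size + 1 : ℕ) + 1 : ℝ) ∧
      WeightBalanced a l ∧ WeightBalanced a r

/-- The rank of `x` in `t`: the number of keys of `t` that are `≤ x`. -/
def rank (t : BT α) (x : α) : ℕ := (t.keys.filter (fun y => y ≤ x)).length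

end BT

section Defs

variable {α : Type} [LinearOrder α]

/-- The insertion tree of a sequence: leaf-insert the keys in order. -/
def bstOf (π : List α) : BT α := π.foldl BT.insertKey BT.leaf

/-- `q` is a sub-root: a node of `t` not yet touched whose parent is touched,
where `touched` is the list of touched keys. -/
def IsSubRoot (t : BT α) (touched : List α) (q : α) : Prop :=
  q ∈ t.keys ∧ q ∉ touched ∧ ∃ p, t.parentKey q = some p ∧ p ∈ touched

/-- π avoids the pattern (2,3,1). -/
def Avoids231 (π : List α) : Prop :=
  ¬ ∃ i j k : Fin π.length, i < j ∧ j < k ∧ π.get k < π.get i ∧ π.get i < π.get j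

/-- π avoids the pattern (3,1,2). -/
def Avoids312 (π : List α) : Prop :=
  ¬ ∃ i j k : Fin π.length, i < j ∧ j < k ∧ π.get j < π.get k ∧ π.get k < π.get i

/-- π avoids the pattern (2,1,3). -/
def Avoids213 (π : List α) : Prop :=
  ¬ ∃ i j k : Fin π.length, i < j ∧ j < k ∧ π.get j < π.get i ∧ π.get i < π.get k

/-- π contains a strictly decreasing subsequence of length `k`. -/
def HasDecreasingSubseq (π : List α) (k : ℕ) : Prop :=
  ∃ s : List α, s.Sublist π ∧ s.length = k ∧ s.Chain' (· > ·)

/-- Splay the keys of a list in order, starting from `t`. -/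
def splaySeq (π : List α) (t : BT α) : BT α := π.foldl (fun s x => BT.splay x s) t

/-- The cost of splaying a sequence of keys starting from `t`:
each splay costs the current depth of the requested key plus one. -/
def splayCost : BT α → List α → ℕ
  | _, [] => 0
  | t, x :: xs => (t.depthOf x + 1) + splayCost (BT.splay x t) xs

/-- The cost of insertion splaying a sequence of keys starting from `t`:
each key is leaf-inserted, then the new node is splayed, at a cost of
its depth after insertion plus one. -/
def insertSplayCost : BT α → List α → ℕ
  | _, [] => 0
  | t, x :: xs =>
    ((t.insertKey x).depthOf x + 1) + insertSplayCost (BT.splay x (t.insertKey x)) xs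

/-- `DF rk xs` = Σ_{i≥2} log₂(|rk(x_i) − rk(x_{i−1})| + 1). -/
noncomputable def DF (rk : α → ℕ) (xs : List α) : ℝ :=
  ((xs.zip xs.tail).map
    (fun p => Real.logb 2 (|(rk p.2 : ℝ) - (rk p.1 : ℝ)| + 1))).sum

/-- The rank of `x` within the sequence `σ` itself. -/
def rankIn (σ : List α) (x : α) : ℕ := (σ.filter (fun y => y ≤ x)).length

/-- The dynamic-finger sum of a sequence, with ranks computed in the
sequence itself. -/
noncomputable def DFseq (σ : List α) : ℝ := DF (rankIn σ) σ

end Defs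

namespace BT

variable {α : Type} [LinearOrder α]

/-- Keys on the search path for `q` (the strict ancestors of `q`'s node
when `q` is present in a BST), listed from the root downwards. -/
def anc : BT α → α → List α
  | leaf, _ => []
  | node l v r, q =>
    if q < v then v :: anc l q
    else if v < q then v :: anc r q
    else []

theorem mem_keys_insertKey {t : BT α} {y a : α} :
    a ∈ (t.insertKey y).keys ↔ a = y ∨ a ∈ t.keys := by
  induction t with
  | leaf => simp [insertKey, keys]
  | node l v r ihl ihr =>
    rcases lt_trichotomy y v with h | h | h
    · simp only [insertKey, if_pos h, keys, List.mem_append, List.mem_cons, ihl]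
      tauto
    · subst h
      simp only [insertKey, lt_irrefl, if_neg (lt_irrefl y), ↓reduceIte, keys, List.mem_append,
        List.mem_cons]
      tauto
    · simp only [insertKey, if_neg (not_lt.2 h.le), if_pos h, keys, List.mem_append,
        List.mem_cons, ihr]
      tauto

theorem insertKey_ne_leaf (t : BT α) (y : α) : t.insertKey y ≠ leaf := by
  cases t with
  | leaf => simp [insertKey]
  | node l v r =>
    simp only [insertKey]
    split <;> [skip; split] <;> simp

theorem isBST_insertKey {t : BT α} (h : t.IsBST) (y : α) : (t.insertKey y).IsBST := by
  induction t with
  | leaf => simp [insertKey, IsBST, keys]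
  | node l v r ihl ihr =>
    obtain ⟨hl, hr, hbl, hbr⟩ := h
    rcases lt_trichotomy y v with h1 | h1 | h1
    · simp only [insertKey, if_pos h1, IsBST]
      refine ⟨?_, hr, ihl hbl, hbr⟩
      intro k hk
      rcases mem_keys_insertKey.1 hk with rfl | hk
      · exact h1
      · exact hl k hk
    · subst h1
      simp only [insertKey, if_neg (lt_irrefl y)]
      exact ⟨hl, hr, hbl, hbr⟩
    · simp only [insertKey, if_neg (not_lt.2 h1.le), if_pos h1, IsBST]
      refine ⟨hl, ?_, hbl, ihr hbr⟩
      intro k hk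
      rcases mem_keys_insertKey.1 hk with rfl | hk
      · exact h1
      · exact hr k hk

theorem mem_keys_of_mem_anc {t : BT α} {q b : α} (h : b ∈ t.anc q) : b ∈ t.keys := by
  induction t with
  | leaf => simp [anc] at h
  | node l v r ihl ihr =>
    simp only [anc] at h
    simp only [keys, List.mem_append, List.mem_cons]
    split at h
    · rcases List.mem_cons.1 h with rfl | h
      · tauto
      · exact Or.inl (ihl h)
    · split at h
      · rcases List.mem_cons.1 h with rfl | h
        · tauto
        · exact Or.inr (Or.inr (ihr h))
      · simp at h

theorem mem_left_of_lt {l r : BT α} {v x : α} (h : (node l v r).IsBST)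
    (hm : x ∈ (node l v r).keys) (hx : x < v) : x ∈ l.keys := by
  obtain ⟨hl, hr, _, _⟩ := h
  simp only [keys, List.mem_append, List.mem_cons] at hm
  rcases hm with hm | rfl | hm
  · exact hm
  · exact absurd hx (lt_irrefl _)
  · exact absurd (hr x hm) (not_lt.2 hx.le)

theorem mem_right_of_lt {l r : BT α} {v x : α} (h : (node l v r).IsBST)
    (hm : x ∈ (node l v r).keys) (hx : v < x) : x ∈ r.keys := by
  obtain ⟨hl, hr, _, _⟩ := h
  simp only [keys, List.mem_append, List.mem_cons] at hm
  rcases hm with hm | rfl | hm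
  · exact absurd (hl x hm) (not_lt.2 hx.le)
  · exact absurd hx (lt_irrefl _)
  · exact hm

theorem anc_insertKey_self (t : BT α) (y : α) : (t.insertKey y).anc y = t.anc y := by
  induction t with
  | leaf => simp [insertKey, anc]
  | node l v r ihl ihr =>
    rcases lt_trichotomy y v with h1 | h1 | h1
    · simp only [insertKey, if_pos h1, anc, ihl]
    · subst h1
      simp only [insertKey, if_neg (lt_irrefl y), anc]
    · simp only [insertKey, if_neg (not_lt.2 h1.le), if_pos h1, anc,
        if_neg (not_lt.2 h1.le), ihr]

theorem anc_insertKey_of_mem {t : BT α} (h : t.IsBST) {x : α} (hx : x ∈ t.keys) (y : α) :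
    (t.insertKey y).anc x = t.anc x := by
  induction t with
  | leaf => simp [keys] at hx
  | node l v r ihl ihr =>
    obtain ⟨hl, hr, hbl, hbr⟩ := h
    rcases lt_trichotomy y v with h1 | h1 | h1
    · simp only [insertKey, if_pos h1, anc]
      rcases lt_trichotomy x v with h2 | h2 | h2
      · simp only [if_pos h2]
        rw [ihl hbl (mem_left_of_lt ⟨hl, hr, hbl, hbr⟩ hx h2)]
      · simp [h2]
      · simp [if_neg (not_lt.2 h2.le), if_pos h2]
    · subst h1
      simp only [insertKey, if_neg (lt_irrefl y)]
    · simp only [insertKey, if_neg (not_lt.2 h1.le), if_pos h1, anc]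
      rcases lt_trichotomy x v with h2 | h2 | h2
      · simp [if_pos h2]
      · simp [h2]
      · simp only [if_neg (not_lt.2 h2.le), if_pos h2]
        rw [ihr hbr (mem_right_of_lt ⟨hl, hr, hbl, hbr⟩ hx h2)]

theorem anc_insertKey_cases (t : BT α) (y q : α) :
    (t.insertKey y).anc q = t.anc q ∨ (t.insertKey y).anc q = t.anc q ++ [y] := by
  induction t with
  | leaf =>
    rcases lt_trichotomy q y with h | h | h
    · right; simp [insertKey, anc, if_pos h]
    · left; simp [insertKey, anc, h]
    · right; simp [insertKey, anc, if_neg (not_lt.2 h.le), if_pos h]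
  | node l v r ihl ihr =>
    rcases lt_trichotomy y v with h1 | h1 | h1
    · simp only [insertKey, if_pos h1, anc]
      rcases lt_trichotomy q v with h2 | h2 | h2
      · simp only [if_pos h2]
        rcases ihl with h | h
        · left; rw [h]
        · right; rw [h]; simp
      · left; simp [h2]
      · left; simp [if_neg (not_lt.2 h2.le), if_pos h2]
    · subst h1; left; simp only [insertKey, if_neg (lt_irrefl y)]
    · simp only [insertKey, if_neg (not_lt.2 h1.le), if_pos h1, anc]
      rcases lt_trichotomy q v with h2 | h2 | h2
      · left; simp [if_pos h2]
      · left; simp [h2]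
      · simp only [if_neg (not_lt.2 h2.le), if_pos h2]
        rcases ihr with h | h
        · left; rw [h]
        · right; rw [h]; simp

theorem anc_insertKey_append {t : BT α} {M y q : α} (hk : ∀ k ∈ t.keys, k ≤ M)
    (hy : M < y) (hq : M < q) (hne : q ≠ y) :
    (t.insertKey y).anc q = t.anc q ++ [y] := by
  induction t with
  | leaf =>
    rcases lt_trichotomy q y with h | h | h
    · simp [insertKey, anc, if_pos h]
    · exact absurd h hne
    · simp [insertKey, anc, if_neg (not_lt.2 h.le), if_pos h]
  | node l v r ihl ihr =>
    have hv : v ≤ M := hk v (by simp [keys])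
    have h1 : v < y := lt_of_le_of_lt hv hy
    have h2 : v < q := lt_of_le_of_lt hv hq
    simp only [insertKey, if_neg (not_lt.2 h1.le), if_pos h1, anc,
      if_neg (not_lt.2 h2.le), if_pos h2]
    rw [ihr (fun k hkk => hk k (by simp [keys, hkk]))]
    simp

theorem anc_getLast_max {t : BT α} (h : t.IsBST) {M q : α} (hM : M ∈ t.keys)
    (hk : ∀ k ∈ t.keys, k ≤ M) (hq : M < q) : (t.anc q).getLast? = some M := by
  induction t with
  | leaf => simp [keys] at hM
  | node l v r ihl ihr =>
    obtain ⟨hl, hr, hbl, hbr⟩ := h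
    have hv : v ≤ M := hk v (by simp [keys])
    have h2 : v < q := lt_of_le_of_lt hv hq
    simp only [anc, if_neg (not_lt.2 h2.le), if_pos h2]
    rcases eq_or_lt_of_le hv with rfl | hvM
    · -- v = M : r must be empty
      cases r with
      | leaf => simp [anc]
      | node rl rv rr =>
        have : rv ∈ (node rl rv rr).keys := by simp [keys]
        exact absurd (hk rv (by simp [keys, this])) (not_le.2 (hr rv this))
    · have hMr : M ∈ r.keys := mem_right_of_lt ⟨hl, hr, hbl, hbr⟩ hM hvM
      have hner : r.anc q ≠ [] := by
        cases r with
        | leaf => simp [keys] at hMr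
        | node rl rv rr =>
          have hrv : rv < q := lt_of_le_of_lt (hk rv (by simp [keys])) hq
          simp [anc, if_neg (not_lt.2 hrv.le), if_pos hrv]
      rw [List.getLast?_cons, ihr hbr hMr (fun k hkk => hk k (by simp [keys, hkk]))]
      simp

theorem lt_of_mem_anc_suffix {t : BT α} (h : t.IsBST) {q a : α} :
    ∀ {L1 L2 : List α}, t.anc q = L1 ++ a :: L2 → a < q → ∀ b ∈ L2, a < b := by
  induction t with
  | leaf => intro L1 L2 he _ b hb; simp [anc] at he
  | node l v r ihl ihr =>
    intro L1 L2 he ha b hb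
    obtain ⟨hl, hr, hbl, hbr⟩ := h
    simp only [anc] at he
    split at he
    · rename_i h2
      cases L1 with
      | nil =>
        simp only [List.nil_append, List.cons.injEq] at he
        obtain ⟨rfl, rfl⟩ := he
        exact absurd (ha.trans h2) (lt_irrefl _)
      | cons c L1' =>
        simp only [List.cons_append, List.cons.injEq] at he
        exact ihl hbl he.2 ha b hb
    · split at he
      · rename_i h2
        cases L1 with
        | nil =>
          simp only [List.nil_append, List.cons.injEq] at he
          obtain ⟨rfl, rfl⟩ := he
          exact hr b (mem_keys_of_mem_anc hb)
        | cons c L1' =>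
          simp only [List.cons_append, List.cons.injEq] at he
          exact ihr hbr he.2 ha b hb
      · simp at he

theorem parentKey_eq_anc {t : BT α} (h : t.IsBST) {x : α} (hx : x ∈ t.keys) :
    t.parentKey x = (t.anc x).getLast? := by
  induction t with
  | leaf => simp [keys] at hx
  | node l v r ihl ihr =>
    obtain ⟨hl, hr, hbl, hbr⟩ := h
    rcases lt_trichotomy x v with h2 | h2 | h2
    · have hxl : x ∈ l.keys := mem_left_of_lt ⟨hl, hr, hbl, hbr⟩ hx h2
      simp only [parentKey, if_pos h2, anc]
      cases l with
      | leaf => simp [keys] at hxl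
      | node ll lv lr =>
        by_cases hroot : lv = x
        · subst hroot
          simp [rootKey, anc]
        · have : (node ll lv lr).rootKey = some x ↔ False := by
            simp [rootKey, hroot]
          rw [if_neg (by simp [rootKey, hroot])]
          have hne : (node ll lv lr).anc x ≠ [] := by
            rcases lt_trichotomy x lv with h3 | h3 | h3
            · simp [anc, if_pos h3]
            · exact absurd h3.symm hroot
            · simp [anc, if_neg (not_lt.2 h3.le), if_pos h3]
          obtain ⟨c, cs, hc⟩ : ∃ c cs, (node ll lv lr).anc x = c :: cs := by
            cases hx2 : (node ll lv lr).anc x with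
            | nil => exact absurd hx2 hne
            | cons c cs => exact ⟨c, cs, rfl⟩
          rw [hc, List.getLast?_cons_cons, ← hc, ihl hbl hxl]
    · subst h2
      simp [parentKey, anc]
    · have hxr : x ∈ r.keys := mem_right_of_lt ⟨hl, hr, hbl, hbr⟩ hx h2
      simp only [parentKey, if_neg (not_lt.2 h2.le), if_pos h2, anc]
      cases r with
      | leaf => simp [keys] at hxr
      | node rl rv rr =>
        by_cases hroot : rv = x
        · subst hroot
          simp [rootKey, anc]
        · rw [if_neg (by simp [rootKey, hroot])]
          have hne : (node rl rv rr).anc x ≠ [] := by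
            rcases lt_trichotomy x rv with h3 | h3 | h3
            · simp [anc, if_pos h3]
            · exact absurd h3.symm hroot
            · simp [anc, if_neg (not_lt.2 h3.le), if_pos h3]
          obtain ⟨c, cs, hc⟩ : ∃ c cs, (node rl rv rr).anc x = c :: cs := by
            cases hx2 : (node rl rv rr).anc x with
            | nil => exact absurd hx2 hne
            | cons c cs => exact ⟨c, cs, rfl⟩
          rw [hc, List.getLast?_cons_cons, ← hc, ihr hbr hxr]

theorem mem_keys_foldl {t : BT α} {l : List α} {a : α} :
    a ∈ (l.foldl insertKey t).keys ↔ a ∈ t.keys ∨ a ∈ l := by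
  induction l generalizing t with
  | nil => simp
  | cons y l ih =>
    simp only [List.foldl_cons, ih, mem_keys_insertKey, List.mem_cons]
    tauto

theorem isBST_foldl {t : BT α} (h : t.IsBST) (l : List α) :
    (l.foldl insertKey t).IsBST := by
  induction l generalizing t with
  | nil => exact h
  | cons y l ih => exact ih (isBST_insertKey h y)

theorem foldl_ne_leaf {t : BT α} (h : t ≠ leaf) (l : List α) :
    l.foldl insertKey t ≠ leaf := by
  induction l generalizing t with
  | nil => exact h
  | cons y l ih => exact ih (insertKey_ne_leaf t y)

theorem anc_foldl_of_mem {t : BT α} (h : t.IsBST) {x : α} (hx : x ∈ t.keys)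
    (l : List α) : (l.foldl insertKey t).anc x = t.anc x := by
  induction l generalizing t with
  | nil => rfl
  | cons y l ih =>
    rw [List.foldl_cons, ih (isBST_insertKey h y) (mem_keys_insertKey.2 (Or.inr hx)),
      anc_insertKey_of_mem h hx y]

theorem foldl_anc_suffix {t : BT α} {q M : α} (l : List α)
    (hQ : ∃ L1 L2, t.anc q = L1 ++ M :: L2 ∧ L2 ≠ []) :
    ∃ L1 L2, (l.foldl insertKey t).anc q = L1 ++ M :: L2 ∧ L2 ≠ [] := by
  induction l generalizing t with
  | nil => exact hQ
  | cons y l ih =>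
    refine ih ?_
    obtain ⟨L1, L2, hL, hne⟩ := hQ
    rcases anc_insertKey_cases t y q with h | h
    · exact ⟨L1, L2, by rw [h, hL], hne⟩
    · exact ⟨L1, L2 ++ [y], by rw [h, hL]; simp, by simp⟩

end BT

/-- For a (3,1,2)-avoiding sequence of distinct keys, each key after the first
is, at the time of its insertion, either (a) greater than the maximum `M` of the
inserted prefix and the unique sub-root greater than `M`, or (b) the largest
sub-root smaller than `M`. -/
theorem subroot_cases_of_avoids312 {α : Type} [LinearOrder α]
    (π : List α) (hnd : π.Nodup) (hav : Avoids312 π)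
    (i : Fin π.length) (hi : 1 ≤ i.val) (M : α)
    (hM : M ∈ π.take i.val) (hMmax : ∀ q ∈ π.take i.val, q ≤ M) :
    (M < π.get i ∧ IsSubRoot (bstOf π) (π.take i.val) (π.get i) ∧
       ∀ q, IsSubRoot (bstOf π) (π.take i.val) q → M < q → q = π.get i) ∨
    (π.get i < M ∧ IsSubRoot (bstOf π) (π.take i.val) (π.get i) ∧
       ∀ q, IsSubRoot (bstOf π) (π.take i.val) q → q < M → q ≤ π.get i) := by
  classical
  have hilen : i.val < π.length := i.isLt
  set x := π.get i with hxdef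
  have hxelem : x = π[i.val] := rfl
  -- decomposition of the insertion process at time i
  have hsplit : π = π.take i.val ++ (x :: π.drop (i.val + 1)) := by
    conv_lhs => rw [← List.take_append_drop i.val π]
    rw [List.drop_eq_getElem_cons hilen, ← hxelem]
  have hT : bstOf π =
      (π.drop (i.val + 1)).foldl BT.insertKey ((bstOf (π.take i.val)).insertKey x) := by
    show π.foldl BT.insertKey BT.leaf = _
    conv_lhs => rw [hsplit]
    rw [List.foldl_append, List.foldl_cons]
    rfl
  have hkeys_pre : ∀ a, a ∈ (bstOf (π.take i.val)).keys ↔ a ∈ π.take i.val := by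
    intro a
    show a ∈ ((π.take i.val).foldl BT.insertKey BT.leaf).keys ↔ _
    rw [BT.mem_keys_foldl]
    simp [BT.keys]
  have hkeysT : ∀ a, a ∈ (bstOf π).keys ↔ a ∈ π := by
    intro a
    show a ∈ (π.foldl BT.insertKey BT.leaf).keys ↔ _
    rw [BT.mem_keys_foldl]
    simp [BT.keys]
  have hBSTpre : (bstOf (π.take i.val)).IsBST :=
    BT.isBST_foldl (by trivial) _
  have hBSTT : (bstOf π).IsBST := BT.isBST_foldl (by trivial) _
  have hxnotpre : x ∉ π.take i.val := by
    intro hmem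
    obtain ⟨⟨a, ha⟩, hga⟩ := List.mem_iff_get.1 hmem
    have halen : a < i.val := by
      rw [List.length_take] at ha
      omega
    have halen2 : a < π.length := halen.trans hilen
    have hax : π[a] = π[i.val] := by
      rw [← hxelem, ← hga]
      simp [List.getElem_take]
    exact absurd ((hnd.getElem_inj_iff).1 hax) (Nat.ne_of_lt halen)
  have hkeyT : x ∈ (bstOf π).keys := (hkeysT x).2 (List.get_mem π i)
  have hkle : ∀ k ∈ (bstOf (π.take i.val)).keys, k ≤ M := fun k hk =>
    hMmax k ((hkeys_pre k).1 hk)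
  -- Claim 1: x is a sub-root at time i
  have hsub : IsSubRoot (bstOf π) (π.take i.val) x := by
    refine ⟨hkeyT, hxnotpre, ?_⟩
    have hancT : (bstOf π).anc x = (bstOf (π.take i.val)).anc x := by
      rw [hT, BT.anc_foldl_of_mem (BT.isBST_insertKey hBSTpre x)
        (BT.mem_keys_insertKey.2 (Or.inl rfl)), BT.anc_insertKey_self]
    have hprene : bstOf (π.take i.val) ≠ BT.leaf := by
      have hne : π.take i.val ≠ [] := by
        rw [Ne, List.take_eq_nil_iff]
        push_neg
        constructor
        · omega
        · intro h
          have h0 : π.length = 0 := by rw [h]; rfl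
          omega
      obtain ⟨c, cs, hc⟩ := List.exists_cons_of_ne_nil hne
      show (π.take i.val).foldl BT.insertKey BT.leaf ≠ BT.leaf
      rw [hc, List.foldl_cons]
      exact BT.foldl_ne_leaf (BT.insertKey_ne_leaf _ _) cs
    have hancne : (bstOf (π.take i.val)).anc x ≠ [] := by
      cases hc : bstOf (π.take i.val) with
      | leaf => exact absurd hc hprene
      | node l v r =>
        have hvmem : v ∈ π.take i.val :=
          (hkeys_pre v).1 (by rw [hc]; simp [BT.keys])
        have hvx : v ≠ x := fun h => hxnotpre (h ▸ hvmem)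
        rcases lt_trichotomy x v with h3 | h3 | h3
        · simp [BT.anc, if_pos h3]
        · exact absurd h3.symm hvx
        · simp [BT.anc, if_neg (not_lt.2 h3.le), if_pos h3]
    rcases List.eq_nil_or_concat ((bstOf (π.take i.val)).anc x) with hnil | ⟨L, p, hLp⟩
    · exact absurd hnil hancne
    · rw [List.concat_eq_append] at hLp
      refine ⟨p, ?_, ?_⟩
      · rw [BT.parentKey_eq_anc hBSTT hkeyT, hancT, hLp, List.getLast?_concat]
      · have hpmem : p ∈ (bstOf (π.take i.val)).anc x := by rw [hLp]; simp
        exact (hkeys_pre p).1 (BT.mem_keys_of_mem_anc hpmem)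
  rcases lt_trichotomy M x with hMx | hMx | hMx
  · -- Case (a): M < x
    left
    refine ⟨hMx, hsub, ?_⟩
    intro q hq hMq
    by_contra hne
    obtain ⟨hqkeys, hqnot, p, hpk, hppre⟩ := hq
    have hpM : p ≤ M := hMmax p hppre
    have hCl := BT.anc_getLast_max hBSTpre ((hkeys_pre M).2 hM) hkle hMq
    obtain ⟨L1, hL1⟩ := List.getLast?_eq_some_iff.1 hCl
    have hB := BT.anc_insertKey_append hkle hMx hMq hne
    have hQ : ∃ L1 L2, (bstOf π).anc q = L1 ++ M :: L2 ∧ L2 ≠ [] := by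
      rw [hT]
      exact BT.foldl_anc_suffix _ ⟨L1, [x], by rw [hB, hL1]; simp, by simp⟩
    obtain ⟨L1', L2', hL', hL2ne⟩ := hQ
    have hpk' : ((bstOf π).anc q).getLast? = some p := by
      rw [← BT.parentKey_eq_anc hBSTT hqkeys]
      exact hpk
    rcases List.eq_nil_or_concat L2' with rfl | ⟨ys, d, hys⟩
    · exact absurd rfl hL2ne
    · rw [List.concat_eq_append] at hys
      have hfull : (bstOf π).anc q = (L1' ++ M :: ys) ++ [d] := by
        rw [hL', hys]
        simp
      rw [hfull, List.getLast?_concat] at hpk'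
      have hpd : p = d := (Option.some_inj.1 hpk').symm
      have hpL2 : p ∈ L2' := by rw [hys, hpd]; simp
      have hlt := BT.lt_of_mem_anc_suffix hBSTT hL' hMq p hpL2
      exact absurd hpM (not_le.2 hlt)
  · exact absurd hM (by rw [hMx]; exact hxnotpre)
  · -- Case (b): x < M
    right
    refine ⟨hMx, hsub, ?_⟩
    intro q hq hqM
    by_contra hqx
    push_neg at hqx
    obtain ⟨hqkeys, hqnot, -⟩ := hq
    have hqπ : q ∈ π := (hkeysT q).1 hqkeys
    obtain ⟨⟨j, hj⟩, hgj⟩ := List.mem_iff_get.1 hqπ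
    have hgj' : π[j] = q := hgj
    have hij : i.val < j := by
      rcases lt_trichotomy j i.val with h | h | h
      · exfalso
        apply hqnot
        rw [← hgj']
        have hjt : j < (π.take i.val).length := by
          rw [List.length_take]; omega
        have : (π.take i.val)[j] = π[j] := List.getElem_take
        rw [← this]
        exact List.getElem_mem hjt
      · exfalso
        have hfin : (⟨j, hj⟩ : Fin π.length) = i := Fin.ext h
        have hqx2 : q = x := by rw [← hgj, hfin]
        exact absurd (hqx2 ▸ hqx) (lt_irrefl x)
      · exact h
    obtain ⟨⟨a, ha⟩, hga⟩ := List.mem_iff_get.1 hM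
    have haval : a < i.val := by
      rw [List.length_take] at ha
      omega
    have halen : a < π.length := haval.trans hilen
    have hgaM : π[a] = M := by
      rw [← hga]
      simp [List.getElem_take]
    apply hav
    refine ⟨⟨a, halen⟩, i, ⟨j, hj⟩, ?_, ?_, ?_, ?_⟩
    · exact haval
    · exact hij
    · show π.get i < π.get ⟨j, hj⟩
      rw [hgj]
      exact hqx
    · show π.get ⟨j, hj⟩ < π.get ⟨a, halen⟩
      show π[j] < π[a]
      rw [hgj', hgaM]
      exact hqM
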